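/- For any nonempty subset S ⊆ [n] of the follower's actions, a cover of S with respect to u^L exists if and only if M_S > M_{[n]}. -/

import Mathlib

open scoped Classical
open Finset

noncomputable section

/-- The leader's mixed-strategy simplex Δ_m. -/
def simplex (m : ℕ) : Set (Fin m → ℝ) := stdSimplex ℝ (Fin m)

/-- Linear extension of a payoff matrix to mixed strategies: u(x,j) = ∑ i, x i * u i j. -/
def pay {m n : ℕ} (u : Fin m → Fin n → ℝ) (x : Fin m → ℝ) (j : Fin n) : ℝ :=
  ∑ i, x i * u i j

/-- Inner product on ℝ^m. -/
def dot {m : ℕ} (a x : Fin m → ℝ) : ℝ := ∑ i, a i * x i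

/-- min_{j ∈ S} u(x, j). -/
def minOnS {m n : ℕ} (u : Fin m → Fin n → ℝ) (S : Set (Fin n)) (x : Fin m → ℝ) : ℝ :=
  sInf ((fun j => pay u x j) '' S)

/-- The leader's maximin value M_S = max_{x∈Δ_m} min_{j∈S} u(x,j). -/
def Mval {m n : ℕ} (u : Fin m → Fin n → ℝ) (S : Set (Fin n)) : ℝ :=
  sSup (minOnS u S '' simplex m)

/-- The set 𝓜_S of maximin strategies. -/
def argMM {m n : ℕ} (u : Fin m → Fin n → ℝ) (S : Set (Fin n)) : Set (Fin m → ℝ) :=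
  {x ∈ simplex m | minOnS u S x = Mval u S}

/-- The follower's best-response set BR(x) = argmax_j uF(x,j). -/
def BR {m n : ℕ} (uF : Fin m → Fin n → ℝ) (x : Fin m → ℝ) : Set (Fin n) :=
  {j | ∀ j', pay uF x j' ≤ pay uF x j}

/-- Strong Stackelberg equilibrium of the game (uL, uF). -/
def SSE {m n : ℕ} (uL uF : Fin m → Fin n → ℝ) (x : Fin m → ℝ) (j : Fin n) : Prop :=
  x ∈ simplex m ∧ j ∈ BR uF x ∧
    ∀ x' ∈ simplex m, ∀ j' ∈ BR uF x', pay uL x' j' ≤ pay uL x j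

/-- (x, j) is inducible with respect to the leader payoff uL. -/
def Inducible {m n : ℕ} (uL : Fin m → Fin n → ℝ) (x : Fin m → ℝ) (j : Fin n) : Prop :=
  ∃ uF : Fin m → Fin n → ℝ, SSE uL uF x j

/-- μ is a (maximin-)cover of S w.r.t. uL: max_{x∈𝓜_S} max_{j∈BR(x)} uL(x,j) < M_S. -/
def IsCover {m n : ℕ} (uL μ : Fin m → Fin n → ℝ) (S : Set (Fin n)) : Prop :=
  ∀ x ∈ argMM uL S, ∀ j ∈ BR μ x, pay uL x j < Mval uL S

/-- μ is a proper cover of S w.r.t. uL. -/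
def IsProperCover {m n : ℕ} (uL μ : Fin m → Fin n → ℝ) (S : Set (Fin n)) : Prop :=
  IsCover uL μ S ∧ ∀ x ∈ simplex m, ∀ j ∈ S, j ∉ BR μ x

section aux
variable {m n : ℕ}

lemma minOn_le_pay (u : Fin m → Fin n → ℝ) {S : Set (Fin n)} {j : Fin n} (hj : j ∈ S)
    (x : Fin m → ℝ) : minOnS u S x ≤ pay u x j :=
  csInf_le ((S.toFinite.image _).bddBelow) ⟨j, hj, rfl⟩

lemma le_minOn (u : Fin m → Fin n → ℝ) {S : Set (Fin n)} (hS : S.Nonempty)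
    {x : Fin m → ℝ} {a : ℝ} (h : ∀ j ∈ S, a ≤ pay u x j) : a ≤ minOnS u S x :=
  le_csInf (hS.image _) (by rintro b ⟨j, hj, rfl⟩; exact h j hj)

lemma bddAbove_minOn_image (hm : 0 < m) (u : Fin m → Fin n → ℝ) {S : Set (Fin n)}
    (hS : S.Nonempty) : BddAbove (minOnS u S '' simplex m) := by
  obtain ⟨j0, hj0⟩ := hS
  haveI : Nonempty (Fin m) := ⟨⟨0, hm⟩⟩
  refine ⟨Finset.univ.sup' Finset.univ_nonempty (fun i => u i j0), ?_⟩
  rintro _ ⟨x, hx, rfl⟩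
  have h1 : minOnS u S x ≤ pay u x j0 := minOn_le_pay u hj0 x
  refine h1.trans ?_
  calc pay u x j0 = ∑ i, x i * u i j0 := rfl
    _ ≤ ∑ i, x i * Finset.univ.sup' Finset.univ_nonempty (fun i => u i j0) := by
        refine Finset.sum_le_sum fun i _ => ?_
        exact mul_le_mul_of_nonneg_left (Finset.le_sup' (fun i => u i j0) (Finset.mem_univ i)) (hx.1 i)
    _ = (∑ i, x i) * Finset.univ.sup' Finset.univ_nonempty (fun i => u i j0) := by
        rw [Finset.sum_mul]
    _ = _ := by rw [hx.2, one_mul]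

lemma minOn_le_Mval (hm : 0 < m) (u : Fin m → Fin n → ℝ) {S : Set (Fin n)} (hS : S.Nonempty)
    {x : Fin m → ℝ} (hx : x ∈ simplex m) : minOnS u S x ≤ Mval u S :=
  le_csSup (bddAbove_minOn_image hm u hS) ⟨x, hx, rfl⟩

lemma simplex_nonempty (hm : 0 < m) : (simplex m).Nonempty := by
  refine ⟨fun _ => (m : ℝ)⁻¹, fun i => by positivity, ?_⟩
  have : (m : ℝ) ≠ 0 := Nat.cast_ne_zero.2 hm.ne'
  simp [Finset.sum_const, Finset.card_univ, this]

lemma minOn_univ_eq_inf' (hn : 0 < n) (u : Fin m → Fin n → ℝ) (x : Fin m → ℝ) :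
    minOnS u Set.univ x =
      Finset.univ.inf' (by haveI : Nonempty (Fin n) := ⟨⟨0, hn⟩⟩; exact Finset.univ_nonempty)
        (fun j => pay u x j) := by
  rw [Finset.inf'_eq_csInf_image, minOnS, Finset.coe_univ]

lemma continuous_minOn_univ (hn : 0 < n) (u : Fin m → Fin n → ℝ) :
    Continuous (minOnS u Set.univ) := by
  have : Continuous (fun x : Fin m → ℝ =>
      Finset.univ.inf' (by haveI : Nonempty (Fin n) := ⟨⟨0, hn⟩⟩; exact Finset.univ_nonempty)
        (fun j => pay u x j)) := by
    refine Continuous.finset_inf'_apply _ fun j _ => ?_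
    exact continuous_finset_sum _ fun i _ => (continuous_apply i).mul continuous_const
  simpa [← minOn_univ_eq_inf' hn u] using this

end aux

/-- a cover of S exists iff M_S > M_{[n]}. -/
theorem cover_exists_iff_gt_maximin {m n : ℕ} (hm : 0 < m) (hn : 0 < n)
    (uL : Fin m → Fin n → ℝ) (S : Set (Fin n)) (hS : S.Nonempty) :
    (∃ μ : Fin m → Fin n → ℝ, IsCover uL μ S) ↔ Mval uL Set.univ < Mval uL S := by
  
  constructor
  · rintro ⟨μ, hμ⟩
    by_contra h
    push_neg at h
    have hnS : (Set.univ : Set (Fin n)).Nonempty := ⟨⟨0, hn⟩, trivial⟩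
    obtain ⟨x, hx, hxmax⟩ := (isCompact_stdSimplex ℝ (Fin m)).exists_isMaxOn
      (simplex_nonempty hm) ((continuous_minOn_univ hn uL).continuousOn)
    have hMu : Mval uL Set.univ = minOnS uL Set.univ x := by
      refine le_antisymm (csSup_le ((simplex_nonempty hm).image _) ?_)
        (minOn_le_Mval hm uL hnS hx)
      rintro _ ⟨y, hy, rfl⟩; exact hxmax hy
    have h1 : minOnS uL Set.univ x ≤ minOnS uL S x :=
      csInf_le_csInf ((Set.univ.toFinite.image _).bddBelow) (hS.image _)
        (Set.image_mono (Set.subset_univ S))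
    have hxS : minOnS uL S x = Mval uL S :=
      le_antisymm (minOn_le_Mval hm uL hS hx)
        (by calc Mval uL S ≤ Mval uL Set.univ := h
              _ = minOnS uL Set.univ x := hMu
              _ ≤ minOnS uL S x := h1)
    obtain ⟨j, -, hj⟩ := Finset.exists_max_image Finset.univ (pay μ x)
      ⟨⟨0, hn⟩, Finset.mem_univ _⟩
    have hjBR : j ∈ BR μ x := fun j' => hj j' (Finset.mem_univ j')
    have hlt := hμ x ⟨hx, hxS⟩ j hjBR
    have hge : Mval uL S ≤ pay uL x j :=
      calc Mval uL S ≤ Mval uL Set.univ := h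
        _ = minOnS uL Set.univ x := hMu
        _ ≤ pay uL x j := minOn_le_pay uL (Set.mem_univ j) x
    exact absurd hlt (not_lt.2 hge)
  · intro h
    have hnS : (Set.univ : Set (Fin n)).Nonempty := ⟨⟨0, hn⟩, trivial⟩
    refine ⟨fun i j => -(uL i j), ?_⟩
    rintro x ⟨hx, -⟩ j hj
    have key : ∀ j'' : Fin n, pay (fun i j => -(uL i j)) x j'' = - pay uL x j'' := by
      intro j''; simp [pay, mul_neg]
    have hpay : ∀ j', pay uL x j ≤ pay uL x j' := by
      intro j'
      have := hj j'
      rw [key j', key j] at this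
      linarith
    have hmin : pay uL x j ≤ minOnS uL Set.univ x :=
      le_minOn uL hnS (fun j' _ => hpay j')
    exact lt_of_le_of_lt (hmin.trans (minOn_le_Mval hm uL hnS hx)) h
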